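/- arXiv:2305.15215 — 2 statements merged into one kernel-verified Lean document; each statement's English description precedes it below -/
import Mathlib

section
/- Let a ∈ ℝ^{n−1} and let l = {(a, t) : t > 0} be a vertical geodesic in the Poincaré half-space 𝒰ⁿ. For any point v ∈ 𝒰ⁿ, the infimum of d(v, w) over w ∈ l equals arsinh(‖v̄ − a‖ / vₙ), where v̄ is the vector of the first n−1 coordinates of v. -/
/-- The inverse hyperbolic cosine on `[1, ∞)`. -/
noncomputable def arcosh (x : ℝ) : ℝ := Real.log (x + Real.sqrt (x ^ 2 - 1))

/-- Hyperbolic distance in the Poincaré half-space model. -/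
noncomputable def hdist {n : ℕ} (x y : EuclideanSpace ℝ (Fin (n + 1))) : ℝ :=
  arcosh (1 + ‖x - y‖ ^ 2 / (2 * x (Fin.last n) * y (Fin.last n)))

lemma arcosh_mono {x y : ℝ} (hx : 1 ≤ x) (hxy : x ≤ y) : arcosh x ≤ arcosh y := by
  unfold arcosh
  have h1 : 0 < x + Real.sqrt (x ^ 2 - 1) := by
    nlinarith [Real.sqrt_nonneg (x ^ 2 - 1)]
  apply Real.log_le_log h1
  have : Real.sqrt (x ^ 2 - 1) ≤ Real.sqrt (y ^ 2 - 1) :=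
    Real.sqrt_le_sqrt (by nlinarith)
  linarith

lemma arcosh_sqrt_one_add_sq {u : ℝ} (hu : 0 ≤ u) :
    arcosh (Real.sqrt (1 + u ^ 2)) = Real.arsinh u := by
  unfold arcosh
  rw [Real.arsinh]
  have h : Real.sqrt (1 + u ^ 2) ^ 2 - 1 = u ^ 2 := by
    rw [Real.sq_sqrt (by positivity)]; ring
  rw [h, Real.sqrt_sq hu, add_comm]

/-- The hyperbolic distance from a point `v` of the half-space to the vertical geodesic
`l = {(a, t) : t > 0}` is `arsinh (‖v̄ − a‖ / vₙ)`. -/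
theorem dist_to_vertical_geodesic {n : ℕ} (a : EuclideanSpace ℝ (Fin n))
    (v : EuclideanSpace ℝ (Fin (n + 1))) (hv : 0 < v (Fin.last n)) :
    sInf {d : ℝ | ∃ t : ℝ, 0 < t ∧
        d = hdist v (WithLp.toLp 2 (Fin.snoc a.ofLp t : Fin (n + 1) → ℝ) : EuclideanSpace ℝ (Fin (n + 1)))} =
      Real.arsinh (Real.sqrt (∑ i : Fin n, (v i.castSucc - a i) ^ 2) / v (Fin.last n)) := by
  set s := v (Fin.last n) with hs
  set r := Real.sqrt (∑ i : Fin n, (v i.castSucc - a i) ^ 2) with hrdef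
  have hr : 0 ≤ r := Real.sqrt_nonneg _
  have hr2 : r ^ 2 = ∑ i : Fin n, (v i.castSucc - a i) ^ 2 := by
    rw [hrdef, Real.sq_sqrt (Finset.sum_nonneg fun i _ => sq_nonneg _)]
  -- key computation
  have key : ∀ t : ℝ, 0 < t →
      hdist v (WithLp.toLp 2 (Fin.snoc a.ofLp t : Fin (n + 1) → ℝ) : EuclideanSpace ℝ (Fin (n + 1))) =
        arcosh ((r ^ 2 + s ^ 2 + t ^ 2) / (2 * s * t)) := by
    intro t ht
    set w : EuclideanSpace ℝ (Fin (n + 1)) := WithLp.toLp 2 (Fin.snoc a.ofLp t : Fin (n + 1) → ℝ) with hw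
    have hnorm : ‖v - w‖ ^ 2 =
        r ^ 2 + (s - t) ^ 2 := by
      rw [EuclideanSpace.norm_eq, Real.sq_sqrt (Finset.sum_nonneg fun i _ => by positivity)]
      rw [Fin.sum_univ_castSucc]
      have h1 : ∀ i : Fin n,
          ‖(v - w) i.castSucc‖ ^ 2 =
            (v i.castSucc - a i) ^ 2 := by
        intro i
        have : (v - w) i.castSucc =
            v i.castSucc - a i := by
          simp [hw, Fin.snoc_castSucc]
        rw [this, Real.norm_eq_abs, sq_abs]
      have h2 : ‖(v - w) (Fin.last n)‖ ^ 2 =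
          (s - t) ^ 2 := by
        have : (v - w) (Fin.last n) = s - t := by
          simp [hw, Fin.snoc_last, hs]
        rw [this, Real.norm_eq_abs, sq_abs]
      rw [h2, Finset.sum_congr rfl fun i _ => h1 i, hr2]
    unfold hdist
    rw [hnorm]
    have hlast : w (Fin.last n) = t := by
      simp [hw, Fin.snoc_last]
    rw [hlast]
    congr 1
    rw [← hs]
    field_simp
    ring
  set t₀ := Real.sqrt (r ^ 2 + s ^ 2) with ht₀def
  have ht₀2 : t₀ ^ 2 = r ^ 2 + s ^ 2 := Real.sq_sqrt (by positivity)
  have ht₀ : 0 < t₀ := Real.sqrt_pos.mpr (by positivity)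
  have hts : 0 ≤ t₀ / s := by positivity
  have hx : (r ^ 2 + s ^ 2 + t₀ ^ 2) / (2 * s * t₀) = t₀ / s := by
    field_simp
    nlinarith [ht₀2]
  have hsq : 1 + (r / s) ^ 2 = (t₀ / s) ^ 2 := by
    field_simp
    nlinarith [ht₀2]
  -- the minimal value
  have hmin : arcosh ((r ^ 2 + s ^ 2 + t₀ ^ 2) / (2 * s * t₀)) =
      Real.arsinh (r / s) := by
    rw [hx, ← Real.sqrt_sq hts, ← hsq, arcosh_sqrt_one_add_sq (by positivity)]
  have hone : (1 : ℝ) ≤ t₀ / s := by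
    rw [le_div_iff₀ hv, one_mul]
    rw [← Real.sqrt_sq hv.le, ht₀def]
    exact Real.sqrt_le_sqrt (by nlinarith)
  -- lower bound for all t
  have hlb : ∀ t : ℝ, 0 < t →
      Real.arsinh (r / s) ≤ arcosh ((r ^ 2 + s ^ 2 + t ^ 2) / (2 * s * t)) := by
    intro t ht
    rw [← hmin, hx]
    apply arcosh_mono hone
    rw [div_le_div_iff₀ hv (by positivity)]
    nlinarith [sq_nonneg (t - t₀), ht₀2]
  set S := {d : ℝ | ∃ t : ℝ, 0 < t ∧
      d = hdist v (WithLp.toLp 2 (Fin.snoc a.ofLp t : Fin (n + 1) → ℝ) : EuclideanSpace ℝ (Fin (n + 1)))} with hS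
  have hmem : Real.arsinh (r / s) ∈ S := ⟨t₀, ht₀, by rw [key t₀ ht₀, hmin]⟩
  have hlow : ∀ d ∈ S, Real.arsinh (r / s) ≤ d := by
    rintro d ⟨t, ht, rfl⟩
    rw [key t ht]
    exact hlb t ht
  exact le_antisymm (csInf_le ⟨_, hlow⟩ hmem) (le_csInf ⟨_, hmem⟩ hlow)
end

section
/- Let B be a closed geodesically convex set in the hyperbolic plane ℍ² and let u ∉ B. Define the penumbral cone C(u) = {v ∈ ℍ² : u lies on the geodesic segment from some point s ∈ B to v} (i.e., ∃ s ∈ B with d(s,u) + d(u,v) = d(s,v)). Then C(u) is geodesically convex: if v₁, v₂ ∈ C(u), then every point on the geodesic segment from v₁ to v₂ lies in C(u). -/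
set_option maxHeartbeats 1000000

open UpperHalfPlane

/-- `b` lies on the geodesic segment between `a` and `c` in the hyperbolic plane
(metric betweenness). -/
def HypBtw (a b c : ℍ) : Prop := dist a b + dist b c = dist a c

/-- A set in the hyperbolic plane is geodesically convex if it contains the geodesic
segment between any two of its points. -/
def HypConvex (B : Set ℍ) : Prop :=
  ∀ a ∈ B, ∀ c ∈ B, ∀ b : ℍ, HypBtw a b c → b ∈ B

/-- The penumbral cone with apex `u` and light source `B`: the points `v` such that
`u` lies on the geodesic segment from some point `s ∈ B` to `v`. -/
def PenumbralCone (B : Set ℍ) (u : ℍ) : Set ℍ :=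
  {v : ℍ | ∃ s ∈ B, HypBtw s u v}

section KleinModelAux

open Real

noncomputable def ku (z : ℍ) : ℝ := (z.re ^ 2 + z.im ^ 2 - 1) / (z.re ^ 2 + z.im ^ 2 + 1)
noncomputable def kv (z : ℍ) : ℝ := (-2 * z.re) / (z.re ^ 2 + z.im ^ 2 + 1)
noncomputable def kmu (z : ℍ) : ℝ := 2 * z.im / (z.re ^ 2 + z.im ^ 2 + 1)

lemma nz_pos (z : ℍ) : 0 < z.re ^ 2 + z.im ^ 2 + 1 := by positivity

lemma kmu_pos (z : ℍ) : 0 < kmu z := by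
  have := z.im_pos
  have := nz_pos z
  unfold kmu
  positivity

lemma kmu_sq (z : ℍ) : kmu z ^ 2 = 1 - (ku z ^ 2 + kv z ^ 2) := by
  have h := (nz_pos z).ne'
  unfold kmu ku kv
  field_simp
  ring

lemma klein_ball (z : ℍ) : ku z ^ 2 + kv z ^ 2 < 1 := by
  nlinarith [kmu_sq z, kmu_pos z]

lemma cosh_dist_k (z w : ℍ) :
    Real.cosh (dist z w) * (kmu z * kmu w) = 1 - (ku z * ku w + kv z * kv w) := by
  have hz := z.im_pos
  have hw := w.im_pos
  have hnz := (nz_pos z).ne'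
  have hnw := (nz_pos w).ne'
  have hd2 : dist (z : ℂ) w ^ 2 = (z.re - w.re) ^ 2 + (z.im - w.im) ^ 2 := by
    rw [Complex.dist_eq_re_im, Real.sq_sqrt (by positivity)]
    simp [coe_re, coe_im]
  rw [UpperHalfPlane.cosh_dist, hd2]
  unfold kmu ku kv
  field_simp
  ring

lemma klein_central (p1 p2 m1 m2 q1 q2 : ℝ) (hp : p1 ^ 2 + p2 ^ 2 < 1)
    (hm : m1 ^ 2 + m2 ^ 2 < 1) (hq : q1 ^ 2 + q2 ^ 2 < 1) :
    (0 ≤ (1 - (p1 * q1 + p2 * q2)) * (1 - (m1 ^ 2 + m2 ^ 2))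
        - (1 - (p1 * m1 + p2 * m2)) * (1 - (m1 * q1 + m2 * q2)) ∧
     ((1 - (p1 * q1 + p2 * q2)) * (1 - (m1 ^ 2 + m2 ^ 2))
        - (1 - (p1 * m1 + p2 * m2)) * (1 - (m1 * q1 + m2 * q2))) ^ 2 =
       ((1 - (p1 * m1 + p2 * m2)) ^ 2 - (1 - (p1 ^ 2 + p2 ^ 2)) * (1 - (m1 ^ 2 + m2 ^ 2))) *
       ((1 - (m1 * q1 + m2 * q2)) ^ 2 - (1 - (m1 ^ 2 + m2 ^ 2)) * (1 - (q1 ^ 2 + q2 ^ 2))))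
    ↔ ∃ t : ℝ, 0 ≤ t ∧ t ≤ 1 ∧ m1 = (1 - t) * p1 + t * q1 ∧ m2 = (1 - t) * p2 + t * q2 := by
  constructor
  · rintro ⟨hE, hEq⟩
    -- cross product of α = m - p and β = m - q vanishes
    have hlm : 0 < 1 - (m1 ^ 2 + m2 ^ 2) := by linarith
    have hcross2 : (1 - (m1 ^ 2 + m2 ^ 2)) *
        ((m1 - p1) * (m2 - q2) - (m2 - p2) * (m1 - q1)) ^ 2 = 0 := by
      linear_combination -hEq
    have hcross : (m1 - p1) * (m2 - q2) - (m2 - p2) * (m1 - q1) = 0 := by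
      have := mul_eq_zero.1 hcross2
      rcases this with h | h
      · exact absurd h (by linarith)
      · exact pow_eq_zero_iff two_ne_zero |>.mp h
    by_cases h0 : (m1 - p1) ^ 2 + (m2 - p2) ^ 2 = 0
    · -- m = p
      have e1 : (m1 - p1) ^ 2 = 0 := by linarith [sq_nonneg (m1 - p1), sq_nonneg (m2 - p2)]
      have e2 : (m2 - p2) ^ 2 = 0 := by linarith [sq_nonneg (m1 - p1), sq_nonneg (m2 - p2)]
      have h1 : m1 = p1 := by have := pow_eq_zero_iff two_ne_zero |>.mp e1; linarith
      have h2 : m2 = p2 := by have := pow_eq_zero_iff two_ne_zero |>.mp e2; linarith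
      exact ⟨0, le_refl 0, zero_le_one, by rw [h1]; ring, by rw [h2]; ring⟩
    · have hA : 0 < (m1 - p1) ^ 2 + (m2 - p2) ^ 2 := by
        rcases lt_or_eq_of_le (by positivity : (0:ℝ) ≤ (m1 - p1) ^ 2 + (m2 - p2) ^ 2) with h | h
        · exact h
        · exact absurd h.symm h0
      obtain ⟨s, hb1, hb2⟩ : ∃ s : ℝ, m1 - q1 = s * (m1 - p1) ∧ m2 - q2 = s * (m2 - p2) := by
        refine ⟨((m1 - p1) * (m1 - q1) + (m2 - p2) * (m2 - q2)) /
          ((m1 - p1) ^ 2 + (m2 - p2) ^ 2), ?_, ?_⟩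
        · rw [div_mul_eq_mul_div, eq_div_iff hA.ne']
          linear_combination (-(m2 - p2)) * hcross
        · rw [div_mul_eq_mul_div, eq_div_iff hA.ne']
          linear_combination (m1 - p1) * hcross
      -- C := |α|² - cross(m,α)² > 0
      have hC : 0 < ((m1 - p1) ^ 2 + (m2 - p2) ^ 2)
          - (m1 * (m2 - p2) - m2 * (m1 - p1)) ^ 2 := by
        have hid : ((m1 - p1) ^ 2 + (m2 - p2) ^ 2)
            - (m1 * (m2 - p2) - m2 * (m1 - p1)) ^ 2
            = ((m1 - p1) ^ 2 + (m2 - p2) ^ 2) * (1 - (m1 ^ 2 + m2 ^ 2))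
              + (m1 * (m1 - p1) + m2 * (m2 - p2)) ^ 2 := by ring
        rw [hid]
        have h1 := mul_pos hA hlm
        have h2 := sq_nonneg (m1 * (m1 - p1) + m2 * (m2 - p2))
        linarith
      -- E = -s * C
      have hEs : (1 - (p1 * q1 + p2 * q2)) * (1 - (m1 ^ 2 + m2 ^ 2))
          - (1 - (p1 * m1 + p2 * m2)) * (1 - (m1 * q1 + m2 * q2))
          = -s * (((m1 - p1) ^ 2 + (m2 - p2) ^ 2)
              - (m1 * (m2 - p2) - m2 * (m1 - p1)) ^ 2) := by
        linear_combination (-(m1 - p1) - (m1 * (m2 - p2) - m2 * (m1 - p1)) * m2) * hb1 +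
          (-(m2 - p2) + (m1 * (m2 - p2) - m2 * (m1 - p1)) * m1) * hb2
      have hsle : s ≤ 0 := by
        by_contra hpos
        push_neg at hpos
        have hsc := mul_pos hpos hC
        linarith [hE, hEs]
      have h1s : 0 < 1 - s := by linarith
      refine ⟨1 / (1 - s), by positivity, ?_, ?_, ?_⟩
      · rw [div_le_one h1s]; linarith
      · have hne : (1:ℝ) - s ≠ 0 := h1s.ne'
        field_simp
        linear_combination hb1
      · have hne : (1:ℝ) - s ≠ 0 := h1s.ne'
        field_simp
        linear_combination hb2
  · rintro ⟨t, ht0, ht1, hm1, hm2⟩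
    subst hm1; subst hm2
    have hCS : 0 ≤ ((q1 - p1) ^ 2 + (q2 - p2) ^ 2)
        - (p1 * (q2 - p2) - p2 * (q1 - p1)) ^ 2 := by
      have hid : ((q1 - p1) ^ 2 + (q2 - p2) ^ 2)
          - (p1 * (q2 - p2) - p2 * (q1 - p1)) ^ 2
          = ((q1 - p1) ^ 2 + (q2 - p2) ^ 2) * (1 - (p1 ^ 2 + p2 ^ 2))
            + (p1 * (q1 - p1) + p2 * (q2 - p2)) ^ 2 := by ring
      rw [hid]
      have h1 : (0:ℝ) ≤ ((q1 - p1) ^ 2 + (q2 - p2) ^ 2) * (1 - (p1 ^ 2 + p2 ^ 2)) :=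
        mul_nonneg (by positivity) (by linarith)
      have h2 := sq_nonneg (p1 * (q1 - p1) + p2 * (q2 - p2))
      linarith
    have ht : 0 ≤ t * (1 - t) := mul_nonneg ht0 (by linarith)
    constructor
    · linarith [mul_nonneg ht hCS]
    · ring

lemma hypBtw_iff_klein (a b c : ℍ) :
    HypBtw a b c ↔ ∃ t : ℝ, 0 ≤ t ∧ t ≤ 1 ∧
      ku b = (1 - t) * ku a + t * ku c ∧ kv b = (1 - t) * kv a + t * kv c := by
  set d1 := dist a b with hd1def
  set d2 := dist b c with hd2def
  set d3 := dist a c with hd3def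
  have hd1 : 0 ≤ d1 := dist_nonneg
  have hd2 : 0 ≤ d2 := dist_nonneg
  have hd3 : 0 ≤ d3 := dist_nonneg
  have hs1 : 0 ≤ Real.sinh d1 := Real.sinh_nonneg_iff.mpr hd1
  have hs2 : 0 ≤ Real.sinh d2 := Real.sinh_nonneg_iff.mpr hd2
  -- step 1 : HypBtw ↔ cosh-equation
  have step1 : HypBtw a b c ↔
      Real.cosh d1 * Real.cosh d2 + Real.sinh d1 * Real.sinh d2 = Real.cosh d3 := by
    rw [show Real.cosh d1 * Real.cosh d2 + Real.sinh d1 * Real.sinh d2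
        = Real.cosh (d1 + d2) from (Real.cosh_add d1 d2).symm]
    constructor
    · intro h; rw [show d1 + d2 = d3 from h]
    · intro h
      have habs : |d1 + d2| = |d3| := by
        by_contra hne
        rcases lt_or_gt_of_ne hne with hlt | hlt
        · exact absurd h (ne_of_lt (Real.cosh_lt_cosh.mpr hlt))
        · exact absurd h (ne_of_gt (Real.cosh_lt_cosh.mpr hlt))
      rwa [abs_of_nonneg (by linarith), abs_of_nonneg hd3] at habs
  -- step 2 : cosh-equation ↔ sign + squared equation
  have step2 : (Real.cosh d1 * Real.cosh d2 + Real.sinh d1 * Real.sinh d2 = Real.cosh d3) ↔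
      (0 ≤ Real.cosh d3 - Real.cosh d1 * Real.cosh d2 ∧
       (Real.cosh d3 - Real.cosh d1 * Real.cosh d2) ^ 2
         = (Real.cosh d1 ^ 2 - 1) * (Real.cosh d2 ^ 2 - 1)) := by
    constructor
    · intro h
      have hss : Real.sinh d1 * Real.sinh d2 = Real.cosh d3 - Real.cosh d1 * Real.cosh d2 := by
        linarith
      refine ⟨by nlinarith [mul_nonneg hs1 hs2], ?_⟩
      rw [← hss]
      rw [mul_pow, Real.sinh_sq, Real.sinh_sq]
    · rintro ⟨h0, hsq⟩
      have h1 : (Real.sinh d1 * Real.sinh d2) ^ 2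
          = (Real.cosh d3 - Real.cosh d1 * Real.cosh d2) ^ 2 := by
        rw [mul_pow, Real.sinh_sq, Real.sinh_sq, hsq]
      have h2 : Real.sinh d1 * Real.sinh d2 = Real.cosh d3 - Real.cosh d1 * Real.cosh d2 := by
        nlinarith [mul_nonneg hs1 hs2]
      linarith
  -- step 3 : translate the cosh conditions into Klein coordinates
  have hA := kmu_pos a
  have hB := kmu_pos b
  have hC := kmu_pos c
  have hk1 : Real.cosh d1 * (kmu a * kmu b) = 1 - (ku a * ku b + kv a * kv b) :=
    cosh_dist_k a b
  have hk2 : Real.cosh d2 * (kmu b * kmu c) = 1 - (ku b * ku c + kv b * kv c) :=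
    cosh_dist_k b c
  have hk3 : Real.cosh d3 * (kmu a * kmu c) = 1 - (ku a * ku c + kv a * kv c) :=
    cosh_dist_k a c
  have hmb := kmu_sq b
  have hma := kmu_sq a
  have hmc := kmu_sq c
  have factE : (1 - (ku a * ku c + kv a * kv c)) * (1 - (ku b ^ 2 + kv b ^ 2))
      - (1 - (ku a * ku b + kv a * kv b)) * (1 - (ku b * ku c + kv b * kv c))
      = (kmu a * kmu b ^ 2 * kmu c) * (Real.cosh d3 - Real.cosh d1 * Real.cosh d2) := by
    rw [← hk3, ← hk1, ← hk2, ← hmb]; ring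
  have factD1 : (1 - (ku a * ku b + kv a * kv b)) ^ 2
      - (1 - (ku a ^ 2 + kv a ^ 2)) * (1 - (ku b ^ 2 + kv b ^ 2))
      = (kmu a * kmu b) ^ 2 * (Real.cosh d1 ^ 2 - 1) := by
    rw [← hk1, ← hma, ← hmb]; ring
  have factD2 : (1 - (ku b * ku c + kv b * kv c)) ^ 2
      - (1 - (ku b ^ 2 + kv b ^ 2)) * (1 - (ku c ^ 2 + kv c ^ 2))
      = (kmu b * kmu c) ^ 2 * (Real.cosh d2 ^ 2 - 1) := by
    rw [← hk2, ← hmb, ← hmc]; ring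
  have hpos : 0 < kmu a * kmu b ^ 2 * kmu c := by positivity
  have step3 : (0 ≤ Real.cosh d3 - Real.cosh d1 * Real.cosh d2 ∧
       (Real.cosh d3 - Real.cosh d1 * Real.cosh d2) ^ 2
         = (Real.cosh d1 ^ 2 - 1) * (Real.cosh d2 ^ 2 - 1)) ↔
      (0 ≤ (1 - (ku a * ku c + kv a * kv c)) * (1 - (ku b ^ 2 + kv b ^ 2))
        - (1 - (ku a * ku b + kv a * kv b)) * (1 - (ku b * ku c + kv b * kv c)) ∧
     ((1 - (ku a * ku c + kv a * kv c)) * (1 - (ku b ^ 2 + kv b ^ 2))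
        - (1 - (ku a * ku b + kv a * kv b)) * (1 - (ku b * ku c + kv b * kv c))) ^ 2 =
       ((1 - (ku a * ku b + kv a * kv b)) ^ 2
          - (1 - (ku a ^ 2 + kv a ^ 2)) * (1 - (ku b ^ 2 + kv b ^ 2))) *
       ((1 - (ku b * ku c + kv b * kv c)) ^ 2
          - (1 - (ku b ^ 2 + kv b ^ 2)) * (1 - (ku c ^ 2 + kv c ^ 2)))) := by
    rw [factE, factD1, factD2]
    constructor
    · rintro ⟨h0, hsq⟩
      exact ⟨mul_nonneg hpos.le h0, by rw [mul_pow, hsq]; ring⟩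
    · rintro ⟨h0, hsq⟩
      have hX : 0 ≤ Real.cosh d3 - Real.cosh d1 * Real.cosh d2 := by
        by_contra hneg
        push_neg at hneg
        nlinarith [mul_neg_of_pos_of_neg hpos hneg]
      refine ⟨hX, ?_⟩
      have h2 : (kmu a * kmu b ^ 2 * kmu c) ^ 2 * (Real.cosh d3 - Real.cosh d1 * Real.cosh d2) ^ 2
          = (kmu a * kmu b ^ 2 * kmu c) ^ 2 * ((Real.cosh d1 ^ 2 - 1) * (Real.cosh d2 ^ 2 - 1)) := by
        linear_combination hsq
      exact mul_left_cancel₀ (by positivity) h2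
  rw [step1, step2, step3]
  exact klein_central (ku a) (kv a) (ku b) (kv b) (ku c) (kv c)
    (klein_ball a) (klein_ball b) (klein_ball c)

lemma klein_inj {a b : ℍ} (hu : ku a = ku b) (hv : kv a = kv b) : a = b := by
  have ha := (nz_pos a)
  have hb := (nz_pos b)
  have hia := a.im_pos
  have hib := b.im_pos
  unfold ku at hu
  unfold kv at hv
  rw [div_eq_div_iff ha.ne' hb.ne'] at hu
  rw [div_eq_div_iff ha.ne' hb.ne'] at hv
  have hn : a.re ^ 2 + a.im ^ 2 = b.re ^ 2 + b.im ^ 2 := by nlinarith [hu]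
  have hv' : a.re * (b.re ^ 2 + b.im ^ 2 + 1) = b.re * (b.re ^ 2 + b.im ^ 2 + 1) := by
    linear_combination (-1/2 : ℝ) * hv + b.re * hn
  have hre : a.re = b.re := mul_right_cancel₀ hb.ne' hv'
  have him2 : (a.im - b.im) * (a.im + b.im) = 0 := by
    linear_combination hn - (a.re + b.re) * hre
  have him : a.im = b.im := by
    rcases mul_eq_zero.1 him2 with h | h
    · linarith
    · linarith
  have : (a : ℂ) = (b : ℂ) := Complex.ext (by simpa [coe_re] using hre) (by simpa [coe_im] using him)
  exact coe_injective this

lemma klein_surj {u1 u2 : ℝ} (h : u1 ^ 2 + u2 ^ 2 < 1) :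
    ∃ z : ℍ, ku z = u1 ∧ kv z = u2 := by
  have h1u : 0 < 1 - u1 := by nlinarith [sq_nonneg u2]
  have hr : 0 < 1 - u1 ^ 2 - u2 ^ 2 := by linarith
  set x : ℝ := -u2 / (1 - u1) with hx
  set y : ℝ := Real.sqrt (1 - u1 ^ 2 - u2 ^ 2) / (1 - u1) with hy
  have hypos : 0 < y := by
    rw [hy]
    exact div_pos (Real.sqrt_pos.mpr hr) h1u
  have hxyne : x ^ 2 + y ^ 2 + 1 ≠ 0 := by positivity
  have hne : (1:ℝ) - u1 ≠ 0 := ne_of_gt h1u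
  have hy2 : y ^ 2 = (1 - u1 ^ 2 - u2 ^ 2) / (1 - u1) ^ 2 := by
    rw [hy, div_pow, Real.sq_sqrt hr.le]
  refine ⟨⟨⟨x, y⟩, hypos⟩, ?_, ?_⟩
  · show ((x ^ 2 + y ^ 2 - 1) / (x ^ 2 + y ^ 2 + 1)) = u1
    rw [div_eq_iff hxyne, hx, hy2]
    field_simp
    ring
  · show (-2 * x / (x ^ 2 + y ^ 2 + 1)) = u2
    rw [div_eq_iff hxyne, hx, hy2]
    field_simp
    ring

lemma ball_convex {x1 y1 x2 y2 t : ℝ} (h1 : x1 ^ 2 + y1 ^ 2 < 1) (h2 : x2 ^ 2 + y2 ^ 2 < 1)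
    (ht0 : 0 ≤ t) (ht1 : t ≤ 1) :
    ((1 - t) * x1 + t * x2) ^ 2 + ((1 - t) * y1 + t * y2) ^ 2 < 1 := by
  have key : 0 ≤ t * (1 - t) * ((x1 - x2) ^ 2 + (y1 - y2) ^ 2) :=
    mul_nonneg (mul_nonneg ht0 (by linarith)) (by positivity)
  rcases eq_or_lt_of_le ht1 with h | h
  · subst h; nlinarith
  · nlinarith [key, mul_pos (show (0:ℝ) < 1 - t by linarith)
      (show (0:ℝ) < 1 - (x1 ^ 2 + y1 ^ 2) by linarith),
      mul_nonneg ht0 (show (0:ℝ) ≤ 1 - (x2 ^ 2 + y2 ^ 2) by linarith)]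

end KleinModelAux

/-- Penumbral cones over a closed geodesically convex light source are geodesically
convex. -/
theorem penumbralCone_convex (B : Set ℍ) (hBcl : IsClosed B) (hBconv : HypConvex B)
    (u : ℍ) (hu : u ∉ B) : HypConvex (PenumbralCone B u) := by
  intro v1 hv1 v2 hv2 b hb
  obtain ⟨s1, hs1B, hs1⟩ := hv1
  obtain ⟨s2, hs2B, hs2⟩ := hv2
  obtain ⟨a, ha0, ha1, hau, hav⟩ := (hypBtw_iff_klein s1 u v1).1 hs1
  obtain ⟨c, hc0, hc1, hcu, hcv⟩ := (hypBtw_iff_klein s2 u v2).1 hs2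
  obtain ⟨t, ht0, ht1, htu, htv⟩ := (hypBtw_iff_klein v1 b v2).1 hb
  have hane : 0 < a := by
    rcases eq_or_lt_of_le ha0 with h | h
    · exfalso
      apply hu
      have h1 : ku u = ku s1 := by rw [hau, ← h]; ring
      have h2 : kv u = kv s1 := by rw [hav, ← h]; ring
      exact (klein_inj h1 h2) ▸ hs1B
    · exact h
  have hcne : 0 < c := by
    rcases eq_or_lt_of_le hc0 with h | h
    · exfalso
      apply hu
      have h1 : ku u = ku s2 := by rw [hcu, ← h]; ring
      have h2 : kv u = kv s2 := by rw [hcv, ← h]; ring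
      exact (klein_inj h1 h2) ▸ hs2B
    · exact h
  set p : ℝ := (1 - t) / a with hpdef
  set q : ℝ := t / c with hqdef
  have hp0 : 0 ≤ p := div_nonneg (by linarith) hane.le
  have hq0 : 0 ≤ q := div_nonneg ht0 hcne.le
  have hpa : p * a = 1 - t := div_mul_cancel₀ _ hane.ne'
  have hqc : q * c = t := div_mul_cancel₀ _ hcne.ne'
  have hP0 : 0 ≤ p * (1 - a) := mul_nonneg hp0 (by linarith)
  have hQ0 : 0 ≤ q * (1 - c) := mul_nonneg hq0 (by linarith)
  have hclaim_u : (1 + p * (1 - a) + q * (1 - c)) * ku u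
      = ku b + p * (1 - a) * ku s1 + q * (1 - c) * ku s2 := by
    linear_combination p * hau + q * hcu - htu + (ku v1 - ku u) * hpa + (ku v2 - ku u) * hqc
  have hclaim_v : (1 + p * (1 - a) + q * (1 - c)) * kv u
      = kv b + p * (1 - a) * kv s1 + q * (1 - c) * kv s2 := by
    linear_combination p * hav + q * hcv - htv + (kv v1 - kv u) * hpa + (kv v2 - kv u) * hqc
  set P : ℝ := p * (1 - a) with hPdef
  set Q : ℝ := q * (1 - c) with hQdef
  rcases eq_or_lt_of_le (by linarith : (0:ℝ) ≤ P + Q) with hW | hW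
  · -- degenerate case : u = b
    have hPe : P = 0 := by linarith
    have hQe : Q = 0 := by linarith
    have h1 : ku u = ku b := by
      linear_combination hclaim_u - (ku u - ku s1) * hPe - (ku u - ku s2) * hQe
    have h2 : kv u = kv b := by
      linear_combination hclaim_v - (kv u - kv s1) * hPe - (kv u - kv s2) * hQe
    have hub : u = b := klein_inj h1 h2
    refine ⟨s1, hs1B, ?_⟩
    rw [← hub]
    show dist s1 u + dist u u = dist s1 u
    simp
  · -- main case
    have hWne : (P + Q) ≠ 0 := hW.ne'
    set t' : ℝ := Q / (P + Q) with ht'def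
    have ht'0 : 0 ≤ t' := div_nonneg hQ0 hW.le
    have ht'1 : t' ≤ 1 := by
      rw [ht'def, div_le_one hW]
      linarith
    have ht'W : t' * (P + Q) = Q := div_mul_cancel₀ _ hWne
    have h1t'W : (1 - t') * (P + Q) = P := by linear_combination -ht'W
    obtain ⟨z, hz1, hz2⟩ := klein_surj
      (ball_convex (klein_ball s1) (klein_ball s2) ht'0 ht'1)
    have hzB : z ∈ B := by
      refine hBconv s1 hs1B s2 hs2B z ((hypBtw_iff_klein s1 z s2).2 ⟨t', ht'0, ht'1, hz1, hz2⟩)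
    have hz1' : ku z * (P + Q) = P * ku s1 + Q * ku s2 := by
      rw [hz1]
      linear_combination (ku s1) * h1t'W + (ku s2) * ht'W
    have hz2' : kv z * (P + Q) = P * kv s1 + Q * kv s2 := by
      rw [hz2]
      linear_combination (kv s1) * h1t'W + (kv s2) * ht'W
    set μ : ℝ := 1 / (1 + P + Q) with hμdef
    have hD : (0:ℝ) < 1 + P + Q := by linarith
    have hμD : μ * (1 + P + Q) = 1 := by
      rw [hμdef]
      field_simp
    have hμ0 : 0 ≤ μ := by positivity
    have hμ1 : μ ≤ 1 := by
      rw [hμdef, div_le_one hD]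
      linarith
    refine ⟨z, hzB, (hypBtw_iff_klein z u b).2 ⟨μ, hμ0, hμ1, ?_, ?_⟩⟩
    · linear_combination μ * hclaim_u - μ * hz1' + (ku z - ku u) * hμD
    · linear_combination μ * hclaim_v - μ * hz2' + (kv z - kv u) * hμD
end
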